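/- Let t = (1,...,1,ε,...,ε) and nt = (1-ε,...,1-ε,(1+ε)/(n-d-1),...,(1+ε)/(n-d-1)) in ℚ^n be as above, with 0 < ε sufficiently small. The unique wall x_I = k (with I ⊆ {1,...,n}, 2 ≤ |I| ≤ n-2, 1 ≤ k ≤ d) that separates t from nt (i.e., intersects the relative interior of the segment joining them) is the wall x_{d+2} + ... + x_n = 1, i.e., I = {d+2,...,n} and k = 1. -/

import Mathlib

def tvec (d n : ℕ) (ε : ℚ) : Fin n → ℚ := fun i => if (i : ℕ) < d + 1 then 1 else ε

def ntvec (d n : ℕ) (ε : ℚ) : Fin n → ℚ :=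
  fun i => if (i : ℕ) < d + 1 then 1 - ε else (1 + ε) / ((n : ℚ) - d - 1)

set_option maxHeartbeats 1000000 in
lemma aux_key (d n a b k : ℕ) (hd : 1 ≤ d) (hn : d + 3 ≤ n)
    (ha : a ≤ d + 1) (hb : b ≤ n - d - 1) (hk1 : 1 ≤ k) (hkd : k ≤ d)
    (ε : ℚ) (hε : 0 < ε) (hε' : ε * (n * n) < 1) :
    (((a : ℚ) + b * ε - k) * ((a * (1 - ε) + b * (1 + ε) / ((n : ℚ) - d - 1)) - k) < 0 ↔
      (a = 0 ∧ b = n - d - 1 ∧ k = 1)) := by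
  have hdn : d + 1 ≤ n := by omega
  have hN : (d : ℚ) + 3 ≤ (n : ℚ) := by exact_mod_cast hn
  have hM2 : (2 : ℚ) ≤ (n : ℚ) - d - 1 := by linarith
  have hM0 : (0 : ℚ) < (n : ℚ) - d - 1 := by linarith
  set M : ℚ := (n : ℚ) - d - 1 with hMdef
  have hcast : ((n - d - 1 : ℕ) : ℚ) = M := by
    rw [hMdef, Nat.sub_sub, Nat.cast_sub (by omega)]
    push_cast; ring
  have hbQ : (b : ℚ) ≤ M := by rw [← hcast]; exact_mod_cast hb
  have haQ : (a : ℚ) ≤ (d : ℚ) + 1 := by exact_mod_cast ha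
  have hkQ1 : (1 : ℚ) ≤ (k : ℚ) := by exact_mod_cast hk1
  have hkQd : (k : ℚ) ≤ (d : ℚ) := by exact_mod_cast hkd
  have hdQ : (1 : ℚ) ≤ (d : ℚ) := by exact_mod_cast hd
  have ha0 : (0 : ℚ) ≤ (a : ℚ) := Nat.cast_nonneg a
  have hb0 : (0 : ℚ) ≤ (b : ℚ) := Nat.cast_nonneg b
  have hMn : M ≤ (n : ℚ) := by rw [hMdef]; linarith
  have haN : (a : ℚ) ≤ (n : ℚ) := by linarith
  have hεN : ε * (n : ℚ) < 1 := by nlinarith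
  have hε1 : ε < 1 := by nlinarith
  have hεB : ε * (b : ℚ) < 1 := by nlinarith
  have hεAM : ε * ((a : ℚ) * M) < 1 := by
    nlinarith [mul_le_mul haN hMn hM0.le (Nat.cast_nonneg n), mul_nonneg ha0 hM0.le]
  have hεAM0 : 0 ≤ ε * ((a : ℚ) * M) := mul_nonneg hε.le (mul_nonneg ha0 hM0.le)
  have hεB0 : 0 ≤ ε * (b : ℚ) := mul_nonneg hε.le hb0
  have hfac : (a : ℚ) * (1 - ε) + (b : ℚ) * (1 + ε) / M - (k : ℚ) =
      ((a : ℚ) * M - ε * ((a : ℚ) * M) + b + ε * b - k * M) / M := by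
    rw [eq_div_iff hM0.ne']; field_simp; ring
  rw [hfac, ← mul_div_assoc, div_lt_iff₀ hM0, zero_mul]
  set F1 : ℚ := (a : ℚ) + b * ε - k with hF1def
  set G2 : ℚ := (a : ℚ) * M - ε * ((a : ℚ) * M) + b + ε * b - k * M with hG2def
  clear_value M F1 G2
  rcases lt_trichotomy a k with hak | hak | hak
  · -- a < k : F1 < 0
    have hakQ : (a : ℚ) + 1 ≤ (k : ℚ) := by exact_mod_cast hak
    have hF1 : F1 < 0 := by rw [hF1def]; nlinarith
    by_cases hbm : b = n - d - 1
    · have hBM : (b : ℚ) = M := by rw [← hcast]; exact_mod_cast hbm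
      rcases Nat.eq_zero_or_pos a with ha0' | ha1
      · subst ha0'
        by_cases hk1' : k = 1
        · subst hk1'
          constructor
          · intro; exact ⟨rfl, hbm, rfl⟩
          · intro
            have hG2 : G2 = M * ε := by rw [hG2def, hBM]; push_cast; ring
            exact mul_neg_of_neg_of_pos hF1 (by rw [hG2]; exact mul_pos hM0 hε)
        · -- a = 0, k ≥ 2 : G2 < 0
          have hk2 : (2 : ℚ) ≤ (k : ℚ) := by exact_mod_cast (by omega : 2 ≤ k)
          have hG2e : G2 = M * (1 + ε - k) := by rw [hG2def, hBM]; push_cast; ring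
          have hG2 : G2 < 0 := by
            rw [hG2e]; exact mul_neg_of_pos_of_neg hM0 (by linarith)
          constructor
          · intro h; exact absurd (mul_pos_of_neg_of_neg hF1 hG2) (by linarith)
          · rintro ⟨-, -, hk⟩; exact absurd hk hk1'
      · -- a ≥ 1, b = m, a < k : G2 ≤ 0
        have haQ1 : (1 : ℚ) ≤ (a : ℚ) := by exact_mod_cast ha1
        have hG2e : G2 = M * (((a : ℚ) - k + 1) - ε * ((a : ℚ) - 1)) := by
          rw [hG2def, hBM]; ring
        have hG2 : G2 ≤ 0 := by
          rw [hG2e]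
          apply mul_nonpos_of_nonneg_of_nonpos hM0.le
          nlinarith [mul_nonneg hε.le (by linarith : (0:ℚ) ≤ (a : ℚ) - 1)]
        constructor
        · intro h
          nlinarith [mul_nonneg (neg_nonneg.mpr hF1.le) (neg_nonneg.mpr hG2)]
        · rintro ⟨ha', -, -⟩; omega
    · -- b < m : G2 < 0
      have hbm' : (b : ℚ) + 1 ≤ M := by
        rw [← hcast]; exact_mod_cast (by omega : b + 1 ≤ n - d - 1)
      have hG2 : G2 < 0 := by
        rw [hG2def]
        nlinarith [mul_le_mul_of_nonneg_right hakQ hM0.le]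
      constructor
      · intro h; exact absurd (mul_pos_of_neg_of_neg hF1 hG2) (by linarith)
      · rintro ⟨-, hb', -⟩; exact absurd hb' hbm
  · -- a = k
    subst hak
    rcases Nat.eq_zero_or_pos b with hb' | hb'
    · subst hb'
      have hF1e : F1 = 0 := by rw [hF1def]; push_cast; ring
      constructor
      · intro h; rw [hF1e, zero_mul] at h; exact absurd h (lt_irrefl 0)
      · rintro ⟨-, hb', -⟩
        exfalso
        have : (0 : ℚ) = M := by rw [← hcast]; exact_mod_cast congrArg Nat.cast hb'
        linarith
    · have hbQ1 : (1 : ℚ) ≤ (b : ℚ) := by exact_mod_cast hb'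
      have hF1 : 0 < F1 := by rw [hF1def]; nlinarith
      have hG2 : 0 < G2 := by rw [hG2def]; nlinarith
      constructor
      · intro h; exact absurd (mul_pos hF1 hG2) (by linarith)
      · rintro ⟨ha', -, -⟩; omega
  · -- a > k
    have hakQ : (k : ℚ) + 1 ≤ (a : ℚ) := by exact_mod_cast hak
    have hF1 : 0 < F1 := by rw [hF1def]; nlinarith
    have hG2 : 0 < G2 := by
      rw [hG2def]
      nlinarith [mul_le_mul_of_nonneg_right hakQ hM0.le]
    constructor
    · intro h; exact absurd (mul_pos hF1 hG2) (by linarith)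
    · rintro ⟨ha', -, -⟩; omega



/-- For `0 < ε` sufficiently small, the unique wall `x_I = k`
(`2 ≤ |I| ≤ n-2`, `1 ≤ k ≤ d`) separating `t` from `nt` (i.e. such that
`x_I(t) - k` and `x_I(nt) - k` have opposite nonzero signs) is the wall
`x_{d+2} + … + x_n = 1`. -/
theorem stmt2 (d n : ℕ) (hd : 1 ≤ d) (hn : d + 3 ≤ n) :
    ∃ ε₀ : ℚ, 0 < ε₀ ∧ ∀ ε : ℚ, 0 < ε → ε < ε₀ →
      ∀ I : Finset (Fin n), ∀ k : ℕ, 2 ≤ I.card → I.card ≤ n - 2 → 1 ≤ k → k ≤ d →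
        (((∑ i ∈ I, tvec d n ε i) - (k : ℚ)) * ((∑ i ∈ I, ntvec d n ε i) - (k : ℚ)) < 0 ↔
          (I = Finset.univ.filter (fun i : Fin n => d + 1 ≤ (i : ℕ)) ∧ k = 1)) := by
  have hn0 : (0 : ℚ) < (n : ℚ) * n := by
    have : (0 : ℚ) < (n : ℚ) := by exact_mod_cast (by omega : 0 < n)
    positivity
  refine ⟨1 / ((n : ℚ) * n), by positivity, fun ε hε hεlt I k hI2 hIn hk1 hkd => ?_⟩
  have hε' : ε * ((n : ℚ) * n) < 1 := by
    rw [div_eq_mul_inv, one_mul] at hεlt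
    calc ε * ((n:ℚ)*n) < ((n:ℚ)*n)⁻¹ * ((n:ℚ)*n) := by
          exact mul_lt_mul_of_pos_right hεlt hn0
      _ = 1 := inv_mul_cancel₀ hn0.ne'
  have hlt : d + 1 < n := by omega
  set P : Fin n → Prop := fun i => (i : ℕ) < d + 1 with hP
  have hdecP : DecidablePred P := fun i => Nat.decLt _ _
  set a : ℕ := (I.filter P).card with hadef
  set b : ℕ := (I.filter (fun i => ¬ P i)).card with hbdef
  set S : Finset (Fin n) := Finset.univ.filter (fun i : Fin n => d + 1 ≤ (i : ℕ)) with hSdef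
  have hSIci : S = Finset.Ici (⟨d + 1, hlt⟩ : Fin n) := by
    ext i; simp [hSdef, Fin.le_def]
  have hScard : S.card = n - d - 1 := by
    have hv : ((⟨d + 1, hlt⟩ : Fin n) : ℕ) = d + 1 := rfl
    rw [hSIci, Fin.card_Ici, hv]; omega
  -- sums
  have hsum : ∀ (f : Fin n → ℚ) (x y : ℚ),
      (∀ i : Fin n, (i : ℕ) < d + 1 → f i = x) → (∀ i : Fin n, ¬ (i : ℕ) < d + 1 → f i = y) →
      (∑ i ∈ I, f i) = (a : ℚ) * x + (b : ℚ) * y := by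
    intro f x y hx hy
    rw [← Finset.sum_filter_add_sum_filter_not I P]
    have e1 : ∀ i ∈ I.filter P, f i = x := fun i hi => hx i (Finset.mem_filter.mp hi).2
    have e2 : ∀ i ∈ I.filter (fun i => ¬ P i), f i = y :=
      fun i hi => hy i (Finset.mem_filter.mp hi).2
    rw [Finset.sum_congr rfl e1, Finset.sum_congr rfl e2, Finset.sum_const, Finset.sum_const,
      nsmul_eq_mul, nsmul_eq_mul, ← hadef, ← hbdef]
  have hsum1 : (∑ i ∈ I, tvec d n ε i) = (a : ℚ) + b * ε := by
    rw [hsum (tvec d n ε) 1 ε (fun i hi => if_pos hi) (fun i hi => if_neg hi)]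
    ring
  have hsum2 : (∑ i ∈ I, ntvec d n ε i) =
      (a : ℚ) * (1 - ε) + b * (1 + ε) / ((n : ℚ) - d - 1) := by
    rw [hsum (ntvec d n ε) (1 - ε) ((1 + ε) / ((n : ℚ) - d - 1))
      (fun i hi => if_pos hi) (fun i hi => if_neg hi)]
    ring
  -- bounds
  have haI : I.filter P ⊆ Finset.Iio (⟨d + 1, hlt⟩ : Fin n) := by
    intro i hi
    simp only [Finset.mem_filter] at hi
    simpa [Finset.mem_Iio, Fin.lt_def, hP] using hi.2
  have ha : a ≤ d + 1 := by
    have := Finset.card_le_card haI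
    rwa [Fin.card_Iio] at this
  have hbI : I.filter (fun i => ¬ P i) ⊆ S := by
    intro i hi
    simp only [Finset.mem_filter, hP, not_lt] at hi
    simp [hSdef, hi.2]; exact hi.2
  have hb : b ≤ n - d - 1 := by
    have := Finset.card_le_card hbI
    rwa [hScard] at this
  rw [hsum1, hsum2, aux_key d n a b k hd hn ha hb hk1 hkd ε hε hε']
  -- set identification
  constructor
  · rintro ⟨ha0, hbm, hk⟩
    refine ⟨?_, hk⟩
    have hIS : I ⊆ S := by
      intro i hi
      have hfe : I.filter P = ∅ := Finset.card_eq_zero.mp ha0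
      have : ¬ P i := by
        intro hPi
        have : i ∈ I.filter P := Finset.mem_filter.mpr ⟨hi, hPi⟩
        simp [hfe] at this
      simp only [hP, not_lt] at this
      simp [hSdef, this]; omega
    apply Finset.eq_of_subset_of_card_le hIS
    rw [hScard, ← hbm, hbdef]
    exact Finset.card_le_card (Finset.filter_subset _ _)
  · rintro ⟨hIS, hk⟩
    subst hIS
    refine ⟨?_, ?_, hk⟩
    · rw [hadef, Finset.card_eq_zero, Finset.filter_eq_empty_iff]
      intro i hi
      simp only [hSdef, Finset.mem_filter] at hi
      simp [hP]; omega
    · rw [hbdef, ← hScard]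
      congr 1
      rw [Finset.filter_eq_self]
      intro i hi
      simp only [hSdef, Finset.mem_filter] at hi
      simp [hP]; omega
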